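/- Let I₁ > 0, let T ∈ (0, ∞], and let R : [0, T) → ℝ be differentiable with R(0) = 0, 0 ≤ R(t) < 1 for all t, and R'(t) = √(I₁·(1 + R(t)²)³/(1 − R(t)²)) for all t. Then T ≤ I₁^{−1/2}·∫₀¹ √((1 − r²)/(1 + r²)³) dr; in particular T is finite. -/

import Mathlib

/-- A zero angular momentum geodesic of energy `I₁ > 0` starting at the pole `R = 0`
reaches the lagrangian circle within finite time: its maximal existence time satisfies
`T ≤ I₁^{-1/2} ∫₀¹ √((1 − r²)/(1 + r²)³) dr`. -/
theorem finite_time_to_circle (I₁ : ℝ) (hI₁ : 0 < I₁) (T : EReal) (hT : 0 < T)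
    (R : ℝ → ℝ) (D : Set ℝ) (hD : D = {t : ℝ | 0 ≤ t ∧ (t : EReal) < T})
    (hR0 : R 0 = 0)
    (hrange : ∀ t ∈ D, 0 ≤ R t ∧ R t < 1)
    (hR' : ∀ t ∈ D, HasDerivWithinAt R
      (Real.sqrt (I₁ * (1 + R t ^ 2) ^ 3 / (1 - R t ^ 2))) D t) :
    T ≤ ((I₁ ^ (-(1 : ℝ) / 2) *
      ∫ r in (0 : ℝ)..1, Real.sqrt ((1 - r ^ 2) / (1 + r ^ 2) ^ 3) : ℝ) : EReal) := by
  classical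
  set f : ℝ → ℝ := fun r => Real.sqrt ((1 - r ^ 2) / (1 + r ^ 2) ^ 3) with hf_def
  have hfc : Continuous f := by
    apply Real.continuous_sqrt.comp
    exact Continuous.div (by continuity) (by continuity) (fun x => by positivity)
  have hfnn : ∀ r, 0 ≤ f r := fun r => Real.sqrt_nonneg _
  set G : ℝ → ℝ := fun x => ∫ r in (0 : ℝ)..x, f r with hG_def
  have hG' : ∀ x : ℝ, HasDerivAt G (f x) x := fun x =>
    intervalIntegral.integral_hasDerivAt_right (hfc.intervalIntegrable _ _)
      (hfc.stronglyMeasurableAtFilter _ _) hfc.continuousAt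
  -- convexity of D
  have hDconv : Convex ℝ D := by
    rw [hD]
    intro a ha b hb α β hα hβ hαβ
    refine ⟨?_, ?_⟩
    · simp only [smul_eq_mul]
      exact add_nonneg (mul_nonneg hα ha.1) (mul_nonneg hβ hb.1)
    have hmax : α • a + β • b ≤ max a b := by
      simp only [smul_eq_mul]
      calc α * a + β * b ≤ α * max a b + β * max a b := by
            gcongr <;> [exact le_max_left a b; exact le_max_right a b]
        _ = max a b := by rw [← add_mul, hαβ, one_mul]
      
    have h1 : ((α • a + β • b : ℝ) : EReal) ≤ ((max a b : ℝ) : EReal) :=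
      EReal.coe_le_coe_iff.mpr hmax
    have h2 : ((max a b : ℝ) : EReal) < T := by
      rcases max_cases a b with ⟨h, _⟩ | ⟨h, _⟩ <;> rw [h]
      · exact ha.2
      · exact hb.2
    exact lt_of_le_of_lt h1 h2
  have h0D : (0 : ℝ) ∈ D := by
    rw [hD]
    refine ⟨le_refl _, ?_⟩
    simpa using hT
  -- the key computation: derivative of t ↦ G (R t) - √I₁ * t is 0 on D
  have hψ : ∀ t ∈ D, HasDerivWithinAt (fun t => G (R t) - Real.sqrt I₁ * t) 0 D t := by
    intro t ht
    obtain ⟨h0, h1⟩ := hrange t ht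
    have hsq : R t ^ 2 < 1 := by nlinarith
    have hpos : (0 : ℝ) < 1 - R t ^ 2 := by linarith
    have hpos' : (0 : ℝ) < (1 + R t ^ 2) ^ 3 := by positivity
    have hcomp : HasDerivWithinAt (fun t => G (R t))
        (f (R t) * Real.sqrt (I₁ * (1 + R t ^ 2) ^ 3 / (1 - R t ^ 2))) D t :=
      (hG' (R t)).comp_hasDerivWithinAt t (hR' t ht)
    have hlin : HasDerivWithinAt (fun t : ℝ => Real.sqrt I₁ * t) (Real.sqrt I₁) D t := by
      simpa using (hasDerivWithinAt_id t D).const_mul (Real.sqrt I₁)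
    have heq : f (R t) * Real.sqrt (I₁ * (1 + R t ^ 2) ^ 3 / (1 - R t ^ 2))
        = Real.sqrt I₁ := by
      rw [hf_def]
      rw [← Real.sqrt_mul (by positivity)]
      congr 1
      field_simp
    have := hcomp.sub hlin
    rw [heq] at this
    simpa [Pi.sub_def] using this
  -- hence G (R t) = √I₁ * t on D
  have key : ∀ t ∈ D, G (R t) = Real.sqrt I₁ * t := by
    intro t ht
    have := hDconv.norm_image_sub_le_of_norm_hasDerivWithin_le (C := 0) hψ
      (fun x _ => by simp) h0D ht
    have h0 : G (R 0) - Real.sqrt I₁ * 0 = 0 := by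
      rw [hR0]
      simp [hG_def]
    rw [zero_mul] at this
    have := norm_le_zero_iff.mp this
    rw [h0] at this
    linarith [sub_eq_zero.mp (by linarith [this] : G (R t) - Real.sqrt I₁ * t - 0 = 0)]
  -- G (R t) ≤ G 1
  have hGle : ∀ t ∈ D, G (R t) ≤ G 1 := by
    intro t ht
    obtain ⟨h0, h1⟩ := hrange t ht
    have hadd : G (R t) + (∫ r in (R t)..1, f r) = G 1 :=
      intervalIntegral.integral_add_adjacent_intervals (hfc.intervalIntegrable _ _)
        (hfc.intervalIntegrable _ _)
    have hnn : 0 ≤ ∫ r in (R t)..1, f r :=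
      intervalIntegral.integral_nonneg h1.le (fun u _ => hfnn u)
    linarith
  -- main real inequality
  have hsqpos : 0 < Real.sqrt I₁ := Real.sqrt_pos.mpr hI₁
  have hrpow : I₁ ^ (-(1 : ℝ) / 2) = (Real.sqrt I₁)⁻¹ := by
    rw [Real.sqrt_eq_rpow, ← Real.rpow_neg hI₁.le]
    norm_num
  have main : ∀ t ∈ D, t ≤ I₁ ^ (-(1 : ℝ) / 2) * G 1 := by
    intro t ht
    rw [hrpow, inv_mul_eq_div, le_div_iff₀ hsqpos, mul_comm]
    calc Real.sqrt I₁ * t = G (R t) := (key t ht).symm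
      _ ≤ G 1 := hGle t ht
  -- conclude in EReal
  have hbnn : (0 : ℝ) ≤ I₁ ^ (-(1 : ℝ) / 2) * G 1 := by
    apply mul_nonneg (Real.rpow_nonneg hI₁.le _)
    exact intervalIntegral.integral_nonneg zero_le_one (fun u _ => hfnn u)
  by_contra hcon
  push_neg at hcon
  obtain ⟨x, hbx, hxT⟩ := exists_between hcon
  lift x to ℝ using ⟨hxT.ne_top, ((EReal.bot_lt_coe _).trans hbx).ne'⟩
  have hbx' : I₁ ^ (-(1 : ℝ) / 2) * G 1 < x := EReal.coe_lt_coe_iff.mp hbx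
  have hxD : x ∈ D := by
    rw [hD]
    exact ⟨le_trans hbnn hbx'.le, hxT⟩
  linarith [main x hxD]
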